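/- Let 1 ≤ p ≤ p̃ ≤ 2 and d/p − d/p̃ < a. Then the embedding b⁰_{p,1} ⊆ b^{−a}_{p̃,1} of sequence Besov spaces is compact (it is the norm limit of the finite-rank truncation operators z ↦ (z_{j,k})_{j≤N}). -/

import Mathlib

open Real ENNReal

/-- ℓ^p norm on a finite block for p ∈ [1,∞], valued in ℝ≥0∞. -/
noncomputable def blockNormE {Λ : Type*} [Fintype Λ] (p : ℝ≥0∞) (v : Λ → ℝ) : ℝ≥0∞ :=
  if p = ∞ then Finset.univ.sup (fun k => (‖v k‖₊ : ℝ≥0∞))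
  else (∑ k, (‖v k‖₊ : ℝ≥0∞) ^ p.toReal) ^ (1 / p.toReal)

/-- ℓ^q norm of a sequence in ℝ≥0∞, q ∈ [1,∞]. -/
noncomputable def lqNormE (q : ℝ≥0∞) (x : ℕ → ℝ≥0∞) : ℝ≥0∞ :=
  if q = ∞ then ⨆ j, x j else (∑' j, x j ^ q.toReal) ^ (1 / q.toReal)

/-- weight 2^{js} 2^{jd(1/2 − 1/p)} (with the convention 1/∞ = 0). -/
noncomputable def wtE (d : ℕ) (s : ℝ) (p : ℝ≥0∞) (j : ℕ) : ℝ≥0∞ :=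
  ENNReal.ofReal ((2:ℝ) ^ ((j:ℝ) * s) * (2:ℝ) ^ ((j:ℝ) * d * (1 / 2 - 1 / p.toReal)))

/-- sequence Besov norm ‖z‖_{b^s_{p,q}}. -/
noncomputable def besovNormE {Λ : ℕ → Type*} [∀ j, Fintype (Λ j)]
    (d : ℕ) (s : ℝ) (p q : ℝ≥0∞) (z : ∀ j, Λ j → ℝ) : ℝ≥0∞ :=
  lqNormE q (fun j => wtE d s p j * blockNormE p (z j))

private lemma lpB {ι : Type*} [Fintype ι] (f : ι → ℝ≥0∞) {s : ℝ} (hs : 0 < s) (i : ι) :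
    f i ≤ (∑ j, f j ^ s) ^ (1/s) := by
  have h1 : f i ^ s ≤ ∑ j, f j ^ s :=
    Finset.single_le_sum (f := fun j => f j ^ s) (fun j _ => zero_le) (Finset.mem_univ i)
  calc f i = (f i ^ s) ^ (1/s) := by
        rw [← ENNReal.rpow_mul, mul_one_div, div_self hs.ne', ENNReal.rpow_one]
    _ ≤ (∑ j, f j ^ s) ^ (1/s) := ENNReal.rpow_le_rpow h1 (by positivity)

private lemma lpA {ι : Type*} [Fintype ι] (f : ι → ℝ≥0∞) (hf : ∀ i, f i ≠ ∞)
    {s t : ℝ} (hs : 0 < s) (hst : s ≤ t) :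
    (∑ i, f i ^ t) ^ (1/t) ≤ (∑ i, f i ^ s) ^ (1/s) := by
  have ht : 0 < t := hs.trans_le hst
  set A := (∑ i, f i ^ s) ^ (1/s) with hA
  have hAs : A ^ s = ∑ i, f i ^ s := by
    rw [hA, ← ENNReal.rpow_mul, one_div, inv_mul_cancel₀ hs.ne', ENNReal.rpow_one]
  by_cases hA0 : A = 0
  · have hsum : ∑ i, f i ^ s = 0 := by
      rw [← hAs, hA0, ENNReal.zero_rpow_of_pos hs]
    have hz : ∀ i, f i = 0 := by
      intro i
      have := (Finset.sum_eq_zero_iff.mp hsum) i (Finset.mem_univ i)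
      rcases ENNReal.rpow_eq_zero_iff.mp this with ⟨h, _⟩ | ⟨_, h⟩
      · exact h
      · linarith
    rw [Finset.sum_eq_zero (fun i _ => by rw [hz i]; exact ENNReal.zero_rpow_of_pos ht),
      ENNReal.zero_rpow_of_pos (by positivity : (0:ℝ) < 1/t)]
    exact zero_le
  have hAtop : A ≠ ∞ := by
    apply ENNReal.rpow_ne_top_of_nonneg (by positivity)
    exact (ENNReal.sum_lt_top.mpr fun i _ =>
      (ENNReal.rpow_lt_top_of_nonneg hs.le (hf i))).ne
  have hfA : ∀ i, f i ≤ A := fun i => lpB f hs i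
  have key : ∀ i, f i ^ t ≤ f i ^ s * A ^ (t - s) := by
    intro i
    rcases eq_or_ne (f i) 0 with h | h
    · simp [h, ENNReal.zero_rpow_of_pos ht]
    · calc f i ^ t = f i ^ s * f i ^ (t - s) := by
            rw [← ENNReal.rpow_add _ _ h (hf i)]; ring_nf
        _ ≤ f i ^ s * A ^ (t - s) :=
            mul_le_mul_right (ENNReal.rpow_le_rpow (hfA i) (by linarith)) _
  have hsum : ∑ i, f i ^ t ≤ A ^ t := by
    calc ∑ i, f i ^ t ≤ ∑ i, f i ^ s * A ^ (t - s) := Finset.sum_le_sum fun i _ => key i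
      _ = (∑ i, f i ^ s) * A ^ (t - s) := by rw [← Finset.sum_mul]
      _ = A ^ s * A ^ (t - s) := by rw [hAs]
      _ = A ^ t := by rw [← ENNReal.rpow_add _ _ hA0 hAtop]; ring_nf
  calc (∑ i, f i ^ t) ^ (1/t) ≤ (A ^ t) ^ (1/t) := ENNReal.rpow_le_rpow hsum (by positivity)
    _ = A := by rw [← ENNReal.rpow_mul, mul_one_div, div_self ht.ne', ENNReal.rpow_one]

private lemma lpC {ι : Type*} [Fintype ι] (f : ι → ℝ≥0∞) {c : ℝ≥0∞}
    (hfc : ∀ i, f i ≤ c) {t : ℝ} (ht : 1 ≤ t)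
    (h1 : 1 ≤ (Fintype.card ι : ℝ≥0∞)) :
    (∑ i, f i ^ t) ^ (1/t) ≤ (Fintype.card ι : ℝ≥0∞) * c := by
  have ht0 : 0 < t := lt_of_lt_of_le one_pos ht
  calc (∑ i, f i ^ t) ^ (1/t)
      ≤ ((Fintype.card ι : ℝ≥0∞) * c ^ t) ^ (1/t) := by
        apply ENNReal.rpow_le_rpow _ (by positivity)
        calc ∑ i, f i ^ t ≤ ∑ _i : ι, c ^ t :=
              Finset.sum_le_sum fun i _ => ENNReal.rpow_le_rpow (hfc i) ht0.le
          _ = (Fintype.card ι : ℝ≥0∞) * c ^ t := by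
              rw [Finset.sum_const, nsmul_eq_mul]; rfl
    _ = (Fintype.card ι : ℝ≥0∞) ^ (1/t) * c := by
        rw [ENNReal.mul_rpow_of_nonneg _ _ (by positivity), ← ENNReal.rpow_mul,
          mul_one_div, div_self ht0.ne', ENNReal.rpow_one]
    _ ≤ (Fintype.card ι : ℝ≥0∞) * c := by
        apply mul_le_mul_left
        calc (Fintype.card ι : ℝ≥0∞) ^ (1/t) ≤ (Fintype.card ι : ℝ≥0∞) ^ (1:ℝ) :=
              ENNReal.rpow_le_rpow_of_exponent_le h1 (by rw [div_le_one ht0]; exact ht)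
          _ = _ := ENNReal.rpow_one _

private lemma wt_eq (d : ℕ) (s : ℝ) (p : ℝ≥0∞) (j : ℕ) :
    wtE d s p j = ENNReal.ofReal ((2:ℝ) ^ ((j:ℝ)*s + (j:ℝ)*d*(1/2 - 1/p.toReal))) := by
  rw [wtE, Real.rpow_add two_pos]

private lemma wt_split (d : ℕ) (a : ℝ) (p p' : ℝ≥0∞) (j : ℕ) :
    wtE d (-a) p' j
      = ENNReal.ofReal ((2:ℝ) ^ (-(j:ℝ) * (a - ((d:ℝ)/p.toReal - (d:ℝ)/p'.toReal)))) * wtE d 0 p j := by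
  rw [wt_eq, wt_eq, ← ENNReal.ofReal_mul (by positivity), ← Real.rpow_add two_pos]
  congr 2
  ring

private lemma wt_cancel (d : ℕ) (p : ℝ≥0∞) (j : ℕ) :
    ENNReal.ofReal ((2:ℝ) ^ ((j:ℝ)*d*(1/p.toReal - 1/2))) * wtE d 0 p j = 1 := by
  rw [wt_eq, ← ENNReal.ofReal_mul (by positivity), ← Real.rpow_add two_pos]
  norm_num
  rw [show (j:ℝ)*(d:ℝ)*(p.toReal⁻¹ - 1/2) + (j:ℝ)*(d:ℝ)*(1/2 - p.toReal⁻¹) = 0 by ring]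
  exact Real.rpow_zero 2

/-- the embedding b⁰_{p,1} ⊆ b^{−a}_{p̃,1} is compact whenever
d/p − d/p̃ < a (formulated as total boundedness of the image of the unit ball). -/
theorem stmt13 {Λ : ℕ → Type*} [∀ j, Fintype (Λ j)]
    (d : ℕ) (hd : 1 ≤ d) (CΛ : ℝ) (hCΛ : 1 ≤ CΛ)
    (hcard : ∀ j : ℕ, 2 ^ (j * d) ≤ Fintype.card (Λ j) ∧
      (Fintype.card (Λ j) : ℝ) ≤ CΛ * 2 ^ (j * d))
    (p p' : ℝ≥0∞) (a : ℝ) (hp1 : 1 ≤ p) (hpp' : p ≤ p') (hp'2 : p' ≤ 2)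
    (ha : (d : ℝ) / p.toReal - (d : ℝ) / p'.toReal < a) :
    ∀ ε : ℝ≥0∞, 0 < ε → ∃ S : Finset (∀ j, Λ j → ℝ),
      ∀ z : ∀ j, Λ j → ℝ, besovNormE d 0 p 1 z ≤ 1 →
        ∃ w ∈ S, besovNormE d (-a) p' 1 (z - w) ≤ ε := by
  classical
  have hp'top : p' ≠ ∞ := by
    intro h; rw [h] at hp'2; exact absurd hp'2 (by simp)
  have hptop : p ≠ ∞ := fun h => hp'top (top_le_iff.mp (h ▸ hpp'))
  have hpr1 : 1 ≤ p.toReal := by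
    have := ENNReal.toReal_mono hptop hp1; simpa using this
  have hprq : p.toReal ≤ p'.toReal := ENNReal.toReal_mono hp'top hpp'
  have hq1 : 1 ≤ p'.toReal := le_trans hpr1 hprq
  have hq2 : p'.toReal ≤ 2 := by
    have := ENNReal.toReal_mono (by norm_num : (2:ℝ≥0∞) ≠ ∞) hp'2
    simpa using this
  have hpr0 : 0 < p.toReal := lt_of_lt_of_le one_pos hpr1
  have hq0 : 0 < p'.toReal := lt_of_lt_of_le one_pos hq1
  set δ : ℝ := a - ((d:ℝ)/p.toReal - (d:ℝ)/p'.toReal) with hδdef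
  have hδ : 0 < δ := by rw [hδdef]; linarith
  intro ε hε
  obtain ⟨e, he0, hee⟩ : ∃ e : ℝ, 0 < e ∧ ENNReal.ofReal e ≤ ε := by
    rcases eq_or_ne ε ∞ with h | h
    · exact ⟨1, one_pos, by simp [h]⟩
    · exact ⟨ε.toReal, ENNReal.toReal_pos hε.ne' h, by rw [ENNReal.ofReal_toReal h]⟩
  obtain ⟨N, hN⟩ : ∃ N : ℕ, (2:ℝ) ^ (-((N:ℝ)+1) * δ) ≤ e/2 := by
    obtain ⟨n, hn⟩ := exists_pow_lt_of_lt_one (half_pos he0)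
      (Real.rpow_lt_one_of_one_lt_of_neg one_lt_two (neg_lt_zero.mpr hδ))
    refine ⟨n, ?_⟩
    have h1 : ((2:ℝ) ^ (-δ)) ^ n = (2:ℝ) ^ (-(n:ℝ) * δ) := by
      rw [← Real.rpow_natCast ((2:ℝ)^(-δ)) n, ← Real.rpow_mul (by norm_num)]
      ring_nf
    have h2 : (2:ℝ) ^ (-((n:ℝ)+1) * δ) ≤ (2:ℝ) ^ (-(n:ℝ) * δ) :=
      Real.rpow_le_rpow_of_exponent_le one_le_two (by nlinarith)
    calc (2:ℝ) ^ (-((n:ℝ)+1) * δ) ≤ (2:ℝ)^(-(n:ℝ)*δ) := h2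
      _ = ((2:ℝ) ^ (-δ)) ^ n := h1.symm
      _ ≤ e/2 := hn.le
  set K : ℝ := (2:ℝ)^((N:ℝ)*|a|) * (CΛ * (2:ℝ)^((N:ℝ)*(d:ℝ))) with hK
  have hK0 : 0 < K := by
    have : (0:ℝ) < CΛ := by linarith
    positivity
  set ε'' : ℝ := (e/2) / (((N:ℝ)+1) * K) with hε''def
  have hε''0 : 0 < ε'' := by positivity
  set R : ℝ := (2:ℝ)^((N:ℝ)*(d:ℝ)) with hR
  have hR0 : (0:ℝ) ≤ R := by positivity
  obtain ⟨t, htf, htsub⟩ :=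
    (Metric.totallyBounded_iff.mp
      (isCompact_closedBall (0 : ∀ j : Fin (N+1), Λ j → ℝ) R).totallyBounded) ε'' hε''0
  set ext : (∀ j : Fin (N+1), Λ j → ℝ) → (∀ j, Λ j → ℝ) :=
    fun y j => if h : j < N+1 then y ⟨j, h⟩ else 0 with hext
  refine ⟨htf.toFinset.image ext, ?_⟩
  intro z hz
  set u : ℕ → ℝ≥0∞ := fun j => wtE d 0 p j * blockNormE p (z j) with hu
  have hz1 : ∑' j, u j ≤ 1 := by
    have h := hz
    rw [besovNormE] at h
    simpa [lqNormE] using h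
  have hu1 : ∀ j, u j ≤ 1 := fun j => le_trans (ENNReal.le_tsum j) hz1
  have hblock : ∀ j, blockNormE p (z j)
      ≤ ENNReal.ofReal ((2:ℝ)^((j:ℝ)*(d:ℝ)*(1/p.toReal - 1/2))) := by
    intro j
    calc blockNormE p (z j)
        = (ENNReal.ofReal ((2:ℝ)^((j:ℝ)*(d:ℝ)*(1/p.toReal - 1/2))) * wtE d 0 p j)
            * blockNormE p (z j) := by rw [wt_cancel, one_mul]
      _ = ENNReal.ofReal ((2:ℝ)^((j:ℝ)*(d:ℝ)*(1/p.toReal - 1/2))) * u j := by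
          rw [hu, mul_assoc]
      _ ≤ ENNReal.ofReal ((2:ℝ)^((j:ℝ)*(d:ℝ)*(1/p.toReal - 1/2))) * 1 :=
          mul_le_mul_right (hu1 j) _
      _ = _ := mul_one _
  have hcoord : ∀ j k, |z j k| ≤ (2:ℝ)^((j:ℝ)*(d:ℝ)*(1/p.toReal - 1/2)) := by
    intro j k
    have h1 : (‖z j k‖₊ : ℝ≥0∞) ≤ blockNormE p (z j) := by
      rw [blockNormE, if_neg hptop]
      exact lpB _ hpr0 k
    have h2 := le_trans h1 (hblock j)
    rw [← enorm_eq_nnnorm, ← ofReal_norm] at h2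
    rw [← Real.norm_eq_abs]
    exact (ENNReal.ofReal_le_ofReal_iff (by positivity)).mp h2
  have hcoordR : ∀ (j : ℕ), j < N+1 → ∀ k, |z j k| ≤ R := by
    intro j hj k
    refine le_trans (hcoord j k) (Real.rpow_le_rpow_of_exponent_le one_le_two ?_)
    have hj' : (j:ℝ) ≤ N := by exact_mod_cast Nat.lt_succ_iff.mp hj
    have h1p : 1/p.toReal - 1/2 ≤ 1 := by
      have : 1/p.toReal ≤ 1 := by rw [div_le_one hpr0]; exact hpr1
      linarith
    calc (j:ℝ)*(d:ℝ)*(1/p.toReal-1/2) ≤ (j:ℝ)*(d:ℝ) :=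
          mul_le_of_le_one_right (by positivity) h1p
      _ ≤ (N:ℝ)*(d:ℝ) := mul_le_mul_of_nonneg_right hj' (Nat.cast_nonneg d)
  set zN : ∀ j : Fin (N+1), Λ j → ℝ := fun j k => z j k with hzN
  have hzNball : zN ∈ Metric.closedBall (0 : ∀ j : Fin (N+1), Λ j → ℝ) R := by
    rw [Metric.mem_closedBall, dist_zero_right]
    refine (pi_norm_le_iff_of_nonneg hR0).mpr fun j => ?_
    refine (pi_norm_le_iff_of_nonneg hR0).mpr fun k => ?_
    rw [Real.norm_eq_abs]
    exact hcoordR j j.isLt k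
  obtain ⟨y, hyt, hy⟩ := Set.mem_iUnion₂.mp (htsub hzNball)
  refine ⟨ext y, Finset.mem_image_of_mem ext (htf.mem_toFinset.mpr hyt), ?_⟩
  have hydist : ∀ (j : ℕ) (hj : j < N+1) (k : Λ j), |z j k - y ⟨j,hj⟩ k| ≤ ε'' := by
    intro j hj k
    have h1 : dist zN y < ε'' := Metric.mem_ball.mp hy
    have h2 : dist (zN ⟨j,hj⟩) (y ⟨j,hj⟩) ≤ dist zN y := dist_le_pi_dist zN y ⟨j,hj⟩
    have h3 : dist (zN ⟨j,hj⟩ k) (y ⟨j,hj⟩ k) ≤ dist (zN ⟨j,hj⟩) (y ⟨j,hj⟩) :=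
      dist_le_pi_dist _ _ k
    have h4 := (h3.trans h2).trans h1.le
    simpa [hzN, Real.dist_eq] using h4
  set g : ℕ → ℝ≥0∞ := fun j => wtE d (-a) p' j * blockNormE p' ((z - ext y) j) with hg
  have hbes : besovNormE d (-a) p' 1 (z - ext y) = ∑' j, g j := by
    rw [besovNormE]; simp [lqNormE, hg]
  -- head bound
  have hhead1 : ∀ (j:ℕ), j < N+1 → g j ≤ ENNReal.ofReal (K * ε'') := by
    intro j hj
    have hjN : (j:ℝ) ≤ N := by exact_mod_cast Nat.lt_succ_iff.mp hj
    have hwt : wtE d (-a) p' j ≤ ENNReal.ofReal ((2:ℝ)^((N:ℝ)*|a|)) := by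
      rw [wt_eq]
      apply ENNReal.ofReal_le_ofReal
      apply Real.rpow_le_rpow_of_exponent_le one_le_two
      have h1 : (j:ℝ)*(-a) ≤ (N:ℝ)*|a| := by
        calc (j:ℝ)*(-a) ≤ (j:ℝ)*|a| :=
              mul_le_mul_of_nonneg_left (neg_le_abs a) (Nat.cast_nonneg j)
          _ ≤ (N:ℝ)*|a| := mul_le_mul_of_nonneg_right hjN (abs_nonneg a)
      have h2 : (j:ℝ)*(d:ℝ)*(1/2 - 1/p'.toReal) ≤ 0 := by
        apply mul_nonpos_of_nonneg_of_nonpos (by positivity)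
        have h3 : 1/2 ≤ 1/p'.toReal := one_div_le_one_div_of_le hq0 hq2
        linarith
      linarith
    have hcardE : (Fintype.card (Λ j) : ℝ≥0∞) ≤ ENNReal.ofReal (CΛ * (2:ℝ)^((N:ℝ)*(d:ℝ))) := by
      rw [← ENNReal.ofReal_natCast]
      apply ENNReal.ofReal_le_ofReal
      refine le_trans (hcard j).2 ?_
      apply mul_le_mul_of_nonneg_left ?_ (by linarith : (0:ℝ) ≤ CΛ)
      calc (2:ℝ)^(j*d) = (2:ℝ)^(((j*d : ℕ)):ℝ) := (Real.rpow_natCast 2 (j*d)).symm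
        _ ≤ (2:ℝ)^((N:ℝ)*(d:ℝ)) := by
            apply Real.rpow_le_rpow_of_exponent_le one_le_two
            push_cast
            exact mul_le_mul_of_nonneg_right hjN (Nat.cast_nonneg d)
    have hcard1 : 1 ≤ (Fintype.card (Λ j) : ℝ≥0∞) := by
      have h1 : 1 ≤ Fintype.card (Λ j) := le_trans (Nat.one_le_two_pow) (hcard j).1
      exact_mod_cast h1
    have hblk : blockNormE p' ((z - ext y) j)
        ≤ ENNReal.ofReal (CΛ * (2:ℝ)^((N:ℝ)*(d:ℝ))) * ENNReal.ofReal ε'' := by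
      rw [blockNormE, if_neg hp'top]
      have hcb : ∀ k, ((‖(z - ext y) j k‖₊ : ℝ≥0∞)) ≤ ENNReal.ofReal ε'' := by
        intro k
        rw [← enorm_eq_nnnorm, ← ofReal_norm]
        apply ENNReal.ofReal_le_ofReal
        have h5 : (z - ext y) j k = z j k - y ⟨j, hj⟩ k := by
          simp [hext, hj, show j ≤ N by omega]
        rw [h5, Real.norm_eq_abs]
        exact hydist j hj k
      calc ((∑ k, ((‖(z - ext y) j k‖₊ : ℝ≥0∞)) ^ p'.toReal) ^ (1/p'.toReal))
          ≤ (Fintype.card (Λ j) : ℝ≥0∞) * ENNReal.ofReal ε'' := lpC _ hcb hq1 hcard1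
        _ ≤ _ := mul_le_mul_left hcardE _
    calc g j ≤ ENNReal.ofReal ((2:ℝ)^((N:ℝ)*|a|))
          * (ENNReal.ofReal (CΛ * (2:ℝ)^((N:ℝ)*(d:ℝ))) * ENNReal.ofReal ε'') :=
          mul_le_mul' hwt hblk
      _ = ENNReal.ofReal (K * ε'') := by
          rw [← ENNReal.ofReal_mul (by positivity : (0:ℝ) ≤ CΛ * (2:ℝ)^((N:ℝ)*(d:ℝ))),
            ← ENNReal.ofReal_mul (by positivity), hK]
          congr 1
          ring
  have hhead : (∑' j, if j < N+1 then g j else 0) ≤ ENNReal.ofReal (e/2) := by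
    calc (∑' j, if j < N+1 then g j else 0)
        = ∑ j ∈ Finset.range (N+1), (if j < N+1 then g j else 0) :=
          tsum_eq_sum (by intro b hb; rw [if_neg (by simpa using hb)])
      _ ≤ ∑ _j ∈ Finset.range (N+1), ENNReal.ofReal (K * ε'') := by
          apply Finset.sum_le_sum
          intro j hj
          rw [if_pos (Finset.mem_range.mp hj)]
          exact hhead1 j (Finset.mem_range.mp hj)
      _ = ((N:ℝ≥0∞)+1) * ENNReal.ofReal (K * ε'') := by
          rw [Finset.sum_const, Finset.card_range, nsmul_eq_mul]
          push_cast
          ring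
      _ = ENNReal.ofReal (((N:ℝ)+1) * (K * ε'')) := by
          rw [ENNReal.ofReal_mul (by positivity : (0:ℝ) ≤ (N:ℝ)+1)]
          congr 1
          rw [ENNReal.ofReal_add (by positivity) (by norm_num)]
          simp [ENNReal.ofReal_natCast]
      _ = ENNReal.ofReal (e/2) := by
          congr 1
          rw [hε''def]
          field_simp
  -- tail bound
  have htail1 : ∀ j, (if j < N+1 then 0 else g j) ≤ ENNReal.ofReal (e/2) * u j := by
    intro j
    split
    · exact zero_le
    · rename_i hj
      push_neg at hj
      have hzw : (z - ext y) j = z j := by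
        funext k
        simp [hext, Nat.not_lt.mpr hj, show ¬ j ≤ N by omega]
      have hmono : blockNormE p' (z j) ≤ blockNormE p (z j) := by
        rw [blockNormE, blockNormE, if_neg hptop, if_neg hp'top]
        exact lpA _ (fun k => ENNReal.coe_ne_top) hpr0 hprq
      have hosmall : ENNReal.ofReal ((2:ℝ)^(-(j:ℝ)*δ)) ≤ ENNReal.ofReal (e/2) := by
        apply ENNReal.ofReal_le_ofReal
        refine le_trans (Real.rpow_le_rpow_of_exponent_le one_le_two ?_) hN
        have hj' : ((N:ℝ)+1) ≤ j := by exact_mod_cast hj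
        nlinarith
      calc g j = wtE d (-a) p' j * blockNormE p' (z j) := by simp only [hg, hzw]
        _ = ENNReal.ofReal ((2:ℝ)^(-(j:ℝ)*δ)) * (wtE d 0 p j * blockNormE p' (z j)) := by
            rw [wt_split d a p p' j, ← hδdef, mul_assoc]
        _ ≤ ENNReal.ofReal ((2:ℝ)^(-(j:ℝ)*δ)) * u j := by
            exact mul_le_mul_right (mul_le_mul_right hmono _) _
        _ ≤ ENNReal.ofReal (e/2) * u j := mul_le_mul_left hosmall _
  have htail : (∑' j, if j < N+1 then 0 else g j) ≤ ENNReal.ofReal (e/2) := by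
    calc (∑' j, if j < N+1 then 0 else g j)
        ≤ ∑' j, ENNReal.ofReal (e/2) * u j := ENNReal.tsum_le_tsum htail1
      _ = ENNReal.ofReal (e/2) * ∑' j, u j := ENNReal.tsum_mul_left
      _ ≤ ENNReal.ofReal (e/2) * 1 := mul_le_mul_right hz1 _
      _ = _ := mul_one _
  rw [hbes]
  calc ∑' j, g j
      = ∑' j, ((if j < N+1 then g j else 0) + (if j < N+1 then 0 else g j)) := by
        refine tsum_congr fun j => ?_
        split <;> simp
    _ = (∑' j, if j < N+1 then g j else 0) + ∑' j, (if j < N+1 then 0 else g j) :=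
        ENNReal.tsum_add
    _ ≤ ENNReal.ofReal (e/2) + ENNReal.ofReal (e/2) := add_le_add hhead htail
    _ = ENNReal.ofReal e := by
        rw [← ENNReal.ofReal_add (by linarith) (by linarith)]
        norm_num
    _ ≤ ε := hee
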